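/- arXiv:1904.08819 — 2 statements merged into one kernel-verified Lean document; each statement's English description precedes it below -/
import Mathlib

section
/- Let q be a connected finite simple graph with at least one edge, and let D be a partition of the edge set E_q into edge-disjoint paths each consisting of at most 2 edges, such that the number of 1-edge paths in D is minimized subject to also being achievable greedily (i.e., D is compact: no two 1-edge paths in D could be merged into a single 2-edge path removal sequence preserving connectivity at each step). Then: if |E_q| is even, D contains exactly ⌊|E_q|/2⌋ paths, all of size 2; if |E_q| is odd, D contains exactly ⌊|E_q|/2⌋ paths of size 2 and one path of size 1, so |D| = ⌊|E_q|/2⌋ + 1. Equivalently, |D| = ⌈|E_q|/2⌉. -/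
/-- `s` is the edge set of a path with at most 2 edges: either a single edge,
or two edges sharing exactly one endpoint. -/
def IsPathEdgesLE2 {V : Type*} [DecidableEq V] (s : Finset (Sym2 V)) : Prop :=
  (∃ a b : V, a ≠ b ∧ s = {s(a, b)}) ∨
    (∃ a b c : V, a ≠ b ∧ b ≠ c ∧ a ≠ c ∧ s = {s(a, b), s(b, c)})

/-- `D` decomposes the edges of `q` into edge-disjoint paths of at most 2 edges. -/
def IsDecompLE2 {V : Type*} [Fintype V] [DecidableEq V]
    (q : SimpleGraph V) [DecidableRel q.Adj] (D : Finset (Finset (Sym2 V))) : Prop :=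
  (∀ s ∈ D, IsPathEdgesLE2 s) ∧
    (D : Set (Finset (Sym2 V))).Pairwise Disjoint ∧
    D.sup id = q.edgeFinset

open SimpleGraph
set_option linter.unusedSectionVars false
set_option maxHeartbeats 1600000

namespace PDAux

variable {V : Type*} [DecidableEq V]

def Gr (E : Finset (Sym2 V)) : SimpleGraph V := SimpleGraph.fromEdgeSet ↑E

lemma gr_adj {E : Finset (Sym2 V)} {x y : V} : (Gr E).Adj x y ↔ s(x,y) ∈ E ∧ x ≠ y := by
  simp [Gr, SimpleGraph.fromEdgeSet_adj]

def Supp (E : Finset (Sym2 V)) (x : V) : Prop := ∃ y, (Gr E).Adj x y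

def Conn (E : Finset (Sym2 V)) : Prop :=
  ∀ x y, Supp E x → Supp E y → (Gr E).Reachable x y

lemma mem_of_walk_edge {E : Finset (Sym2 V)} {a b : V} {p : (Gr E).Walk a b} {g : Sym2 V}
    (hg : g ∈ p.edges) : g ∈ E := by
  have h := p.edges_subset_edgeSet hg
  rw [Gr, SimpleGraph.edgeSet_fromEdgeSet] at h
  exact h.1

lemma mem_support_of_mem_edge {E : Finset (Sym2 V)} {a b x : V} {p : (Gr E).Walk a b}
    {g : Sym2 V} (hg : g ∈ p.edges) (hx : x ∈ g) : x ∈ p.support := by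
  induction g with
  | _ c d =>
    rcases Sym2.mem_iff.mp hx with rfl | rfl
    · exact p.fst_mem_support_of_mem_edges hg
    · exact p.snd_mem_support_of_mem_edges hg

lemma reach_transfer {E E' : Finset (Sym2 V)} (hnd : ∀ g ∈ E, ¬ g.IsDiag) {a b : V}
    (p : (Gr E).Walk a b) (h : ∀ g ∈ p.edges, g ∈ E') : (Gr E').Reachable a b := by
  refine ⟨p.transfer (Gr E') ?_⟩
  intro g hg
  rw [Gr, SimpleGraph.edgeSet_fromEdgeSet]
  exact ⟨h g hg, hnd g (mem_of_walk_edge hg)⟩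

lemma exists_shortest_avoiding {E : Finset (Sym2 V)} {r x v : V}
    (hreach : (Gr E).Reachable r x) (hxv : x ≠ v)
    (hdist : (Gr E).dist r x ≤ (Gr E).dist r v) :
    ∃ p : (Gr E).Walk r x, p.IsPath ∧ p.length = (Gr E).dist r x ∧ v ∉ p.support := by
  obtain ⟨p₀, hp₀⟩ := hreach.exists_walk_length_eq_dist
  have hbl : p₀.bypass.length = (Gr E).dist r x :=
    le_antisymm (hp₀ ▸ p₀.length_bypass_le) (SimpleGraph.dist_le _)
  refine ⟨p₀.bypass, p₀.bypass_isPath, hbl, ?_⟩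
  intro hv
  have hspec := p₀.bypass.take_spec hv
  have hlen : (p₀.bypass.takeUntil v hv).length + (p₀.bypass.dropUntil v hv).length
      = (Gr E).dist r x := by
    have h := congrArg SimpleGraph.Walk.length hspec
    rwa [SimpleGraph.Walk.length_append, hbl] at h
  have h1 : (Gr E).dist r v ≤ (p₀.bypass.takeUntil v hv).length := SimpleGraph.dist_le _
  have h2 : 1 ≤ (p₀.bypass.dropUntil v hv).length := by
    rcases Nat.eq_zero_or_pos (p₀.bypass.dropUntil v hv).length with h0 | h
    · exact absurd (SimpleGraph.Walk.eq_of_length_eq_zero h0).symm hxv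
    · exact h
  omega

lemma caseD_reach {E : Finset (Sym2 V)}
    (hnd : ∀ g ∈ E, ¬ g.IsDiag) (hconn : Conn E)
    {r v u w : V}
    (hSr : Supp E r)
    (hmax : ∀ x, Supp E x → (Gr E).dist r x ≤ (Gr E).dist r v)
    (hd1 : ∀ z, (Gr E).Adj v z → z = u)
    (hru : r ≠ u) (hwv : w ≠ v) (hwu : w ≠ u)
    (hadj_uw : (Gr E).Adj u w)
    (hdu : (Gr E).dist r u + 1 = (Gr E).dist r v)
    {P : (Gr E).Walk r u} (hPpath : P.IsPath) (hPv : v ∉ P.support)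
    (hBr : s(u,w) ∉ P.edges ∨ ∀ z, (Gr E).Adj u z → z = v ∨ z = w) :
    ∀ x, Supp (E \ {s(v,u), s(u,w)}) x →
      (Gr (E \ {s(v,u), s(u,w)})).Reachable r x := by
  set e : Sym2 V := s(v,u) with he_def
  set f : Sym2 V := s(u,w) with hf_def
  set E₂ : Finset (Sym2 V) := E \ {e, f} with hE₂_def
  have hveE : v ∈ e := by rw [he_def]; simp
  have huf : u ∈ f := by rw [hf_def]; simp
  have hin₂ : ∀ g ∈ E, g ≠ e → g ≠ f → g ∈ E₂ := by
    intro g hg h1 h2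
    rw [hE₂_def, Finset.mem_sdiff]
    exact ⟨hg, by simp [h1, h2]⟩
  have hE₂sub : E₂ ⊆ E := Finset.sdiff_subset
  -- no E₂-edge touches v
  have hxnv : ∀ x, Supp E₂ x → x ≠ v := by
    rintro x ⟨z, hadj⟩ rfl
    obtain ⟨hmem, hxz⟩ := gr_adj.mp hadj
    have hzu : z = u := hd1 z (gr_adj.mpr ⟨hE₂sub hmem, hxz⟩)
    subst hzu
    rw [hE₂_def, Finset.mem_sdiff] at hmem
    exact hmem.2 (by simp [he_def])
  -- transfer for walks avoiding v and f
  have htrans : ∀ {a b : V} (p : (Gr E).Walk a b), v ∉ p.support → f ∉ p.edges →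
      (Gr E₂).Reachable a b := by
    intro a b p hv hf
    refine reach_transfer hnd p ?_
    intro g hg
    refine hin₂ g (mem_of_walk_edge hg) ?_ ?_
    · rintro rfl; exact hv (mem_support_of_mem_edge hg hveE)
    · rintro rfl; exact hf hg
  -- the dichotomy
  have dich : ∀ x, x ≠ v → x ≠ u → Supp E x → (Gr E₂).Reachable r x ∨ x = w := by
    intro x hxv hxu hx
    obtain ⟨Q, hQp, hQlen, hQv⟩ := exists_shortest_avoiding (hconn r x hSr hx) hxv (hmax x hx)
    by_cases hfQ : f ∈ Q.edges
    · have huQ : u ∈ Q.support := mem_support_of_mem_edge hfQ huf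
      have hspec := Q.take_spec huQ
      have hedges : Q.edges = (Q.takeUntil u huQ).edges ++ (Q.dropUntil u huQ).edges := by
        conv_lhs => rw [← hspec]
        rw [SimpleGraph.Walk.edges_append]
      have hnodupQ : Q.edges.Nodup := hQp.isTrail.edges_nodup
      have hdisjQ : ∀ g, g ∈ (Q.takeUntil u huQ).edges → g ∈ (Q.dropUntil u huQ).edges → False := by
        rw [hedges] at hnodupQ
        intro g h1 h2
        exact (List.disjoint_of_nodup_append hnodupQ) h1 h2
      have hvdrop : v ∉ (Q.dropUntil u huQ).support :=
        fun h => hQv (Q.support_dropUntil_subset huQ h)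
      rcases List.mem_append.mp (by rw [← hedges]; exact hfQ) with hf1 | hf2
      · -- f in the r→u part
        rcases hBr with hbr1 | hbr2
        · left
          have h1 : (Gr E₂).Reachable r u := htrans P hPv hbr1
          have h2 : (Gr E₂).Reachable u x :=
            htrans (Q.dropUntil u huQ) hvdrop (fun h => hdisjQ f hf1 h)
          exact h1.trans h2
        · exfalso
          obtain ⟨w', hadj', R, hcons⟩ :=
            SimpleGraph.Walk.exists_eq_cons_of_ne (Ne.symm hxu) (Q.dropUntil u huQ)
          have hw'v : w' ≠ v := by
            rintro rfl
            apply hvdrop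
            rw [hcons]
            rw [SimpleGraph.Walk.support_cons]
            exact List.mem_cons_of_mem _ R.start_mem_support
          rcases hbr2 w' hadj' with rfl | rfl
          · exact hw'v rfl
          · exact hdisjQ f hf1 (by rw [hcons, SimpleGraph.Walk.edges_cons]; exact List.mem_cons_self)
      · -- f in the u→x part: conclude x = w
        right
        obtain ⟨w', hadj', R, hcons⟩ :=
          SimpleGraph.Walk.exists_eq_cons_of_ne (Ne.symm hxu) (Q.dropUntil u huQ)
        have hQ₂p : (Q.dropUntil u huQ).IsPath := hQp.dropUntil huQ
        have hf_eq : f = s(u, w') := by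
          rw [hcons, SimpleGraph.Walk.edges_cons] at hf2
          rcases List.mem_cons.mp hf2 with h | h
          · exact h
          · exfalso
            have huR : u ∈ R.support := mem_support_of_mem_edge h huf
            have := hQ₂p.support_nodup
            rw [hcons, SimpleGraph.Walk.support_cons] at this
            exact (List.nodup_cons.mp this).1 huR
        have hww' : w = w' := by
          rw [hf_def, Sym2.eq_iff] at hf_eq
          rcases hf_eq with ⟨-, h⟩ | ⟨h1, h2⟩
          · exact h
          · exact absurd h2 hwu
        subst hww'
        have hlen1 : (Q.takeUntil u huQ).length + (Q.dropUntil u huQ).length = Q.length := by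
          have h := congrArg SimpleGraph.Walk.length hspec
          rwa [SimpleGraph.Walk.length_append] at h
        have hlen2 : (Q.dropUntil u huQ).length = R.length + 1 := by
          rw [hcons, SimpleGraph.Walk.length_cons]
        have hd1' : (Gr E).dist r u ≤ (Q.takeUntil u huQ).length := SimpleGraph.dist_le _
        have hdx : (Gr E).dist r x ≤ (Gr E).dist r v := hmax x hx
        have hR0 : R.length = 0 := by omega
        exact (SimpleGraph.Walk.eq_of_length_eq_zero hR0).symm
    · left
      exact htrans Q hQv hfQ
  -- reaching w given it has an E₂ edge
  have claimW : ∀ g ∈ E₂, w ∈ g → (Gr E₂).Reachable r w := by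
    intro g hg hwg
    obtain ⟨z, hgz⟩ := Sym2.mem_iff_exists.mp hwg
    subst hgz
    have hgE : s(w,z) ∈ E := hE₂sub hg
    have hwz : w ≠ z := fun h => hnd _ hgE (by rw [← h]; simp)
    have hzu : z ≠ u := by
      rintro rfl
      rw [hE₂_def, Finset.mem_sdiff] at hg
      exact hg.2 (by rw [hf_def, Sym2.eq_swap]; simp)
    have hzv : z ≠ v := by
      intro h
      have hadjvw : (Gr E).Adj v w :=
        gr_adj.mpr ⟨by rw [Sym2.eq_swap, ← h]; exact hgE, Ne.symm hwv⟩
      exact hwu (hd1 w hadjvw)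
    have hzS : Supp E z := ⟨w, gr_adj.mpr ⟨by rw [Sym2.eq_swap]; exact hgE, hwz.symm⟩⟩
    rcases dich z hzv hzu hzS with hreach | rfl
    · have : (Gr E₂).Adj z w := gr_adj.mpr ⟨by rw [Sym2.eq_swap]; exact hg, hwz.symm⟩
      exact hreach.trans this.reachable
    · exact absurd rfl hwz
  -- main claim
  intro x hx
  obtain ⟨z, hadj⟩ := hx
  have hxv : x ≠ v := hxnv x ⟨z, hadj⟩
  by_cases hxu : x = u
  · subst hxu
    rcases hBr with hbr1 | hbr2
    · exact htrans P hPv hbr1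
    · exfalso
      obtain ⟨hmem, hxz⟩ := gr_adj.mp hadj
      rcases hbr2 z (gr_adj.mpr ⟨hE₂sub hmem, hxz⟩) with rfl | rfl
      · rw [hE₂_def, Finset.mem_sdiff] at hmem
        exact hmem.2 (by simp [he_def, Sym2.eq_swap])
      · rw [hE₂_def, Finset.mem_sdiff] at hmem
        exact hmem.2 (by simp [hf_def])
  · have hxS : Supp E x := ⟨z, gr_adj.mpr ⟨hE₂sub (gr_adj.mp hadj).1, (gr_adj.mp hadj).2⟩⟩
    rcases dich x hxv hxu hxS with hreach | rfl
    · exact hreach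
    · exact claimW _ (gr_adj.mp hadj).1 (by simp)


lemma reach_avoid {E E' : Finset (Sym2 V)} {r v x : V}
    (hnd : ∀ g ∈ E, ¬g.IsDiag)
    (hre : (Gr E).Reachable r x) (hxv : x ≠ v)
    (hdist : (Gr E).dist r x ≤ (Gr E).dist r v)
    (hv : ∀ g ∈ E, v ∉ g → g ∈ E') :
    (Gr E').Reachable r x := by
  obtain ⟨p, _, _, hvp⟩ := exists_shortest_avoiding hre hxv hdist
  exact reach_transfer hnd p fun g hg =>
    hv g (mem_of_walk_edge hg) fun hvg => hvp (mem_support_of_mem_edge hg hvg)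


lemma sup_erase_of_pairwise {D : Finset (Finset (Sym2 V))}
    (hdisj : (D : Set (Finset (Sym2 V))).Pairwise Disjoint)
    {s : Finset (Sym2 V)} (hs : s ∈ D) : (D.erase s).sup id = D.sup id \ s := by
  ext g
  simp only [Finset.mem_sup, Finset.mem_erase, Finset.mem_sdiff, id]
  constructor
  · rintro ⟨t, ⟨hts, htD⟩, hgt⟩
    exact ⟨⟨t, htD, hgt⟩, fun hgs =>
      (Finset.disjoint_left.mp (hdisj htD hs hts)) hgt hgs⟩
  · rintro ⟨⟨t, htD, hgt⟩, hgs⟩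
    exact ⟨t, ⟨fun h => hgs (h ▸ hgt), htD⟩, hgt⟩

lemma goodD_insert {E s : Finset (Sym2 V)} {D : Finset (Finset (Sym2 V))}
    (hparts : ∀ t ∈ D, IsPathEdgesLE2 t)
    (hdisj : (D : Set (Finset (Sym2 V))).Pairwise Disjoint)
    (hsup : D.sup id = E \ s) (hs : IsPathEdgesLE2 s) (hsub : s ⊆ E) (hne : s.Nonempty) :
    (∀ t ∈ insert s D, IsPathEdgesLE2 t) ∧
      ((insert s D : Finset (Finset (Sym2 V))) : Set (Finset (Sym2 V))).Pairwise Disjoint ∧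
      (insert s D).sup id = E ∧ (insert s D).card = D.card + 1 := by
  have hsubD : ∀ t ∈ D, t ⊆ E \ s := fun t ht => hsup ▸ Finset.le_sup (f := id) ht
  have hdisj2 : ∀ t ∈ D, Disjoint s t := fun t ht =>
    Finset.disjoint_left.mpr fun g hgs hgt => (Finset.mem_sdiff.mp (hsubD t ht hgt)).2 hgs
  have hnotmem : s ∉ D := by
    intro h
    obtain ⟨g, hg⟩ := hne
    exact (Finset.mem_sdiff.mp (hsubD s h hg)).2 hg
  refine ⟨?_, ?_, ?_, Finset.card_insert_of_notMem hnotmem⟩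
  · intro t ht
    rcases Finset.mem_insert.mp ht with rfl | ht
    · exact hs
    · exact hparts t ht
  · intro a ha b hb hab
    simp only [Finset.coe_insert, Set.mem_insert_iff, Finset.mem_coe] at ha hb
    rcases ha with rfl | ha
    · rcases hb with rfl | hb
      · exact absurd rfl hab
      · exact hdisj2 b hb
    · rcases hb with rfl | hb
      · exact (hdisj2 a ha).symm
      · exact hdisj ha hb hab
  · rw [Finset.sup_insert, hsup]
    simp only [id]
    exact Finset.union_sdiff_of_subset hsub

lemma goodD_merge {E : Finset (Sym2 V)} {e : Sym2 V} {D : Finset (Finset (Sym2 V))}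
    {s₀ : Finset (Sym2 V)}
    (hparts : ∀ t ∈ D, IsPathEdgesLE2 t)
    (hdisj : (D : Set (Finset (Sym2 V))).Pairwise Disjoint)
    (hsup : D.sup id = E.erase e) (heE : e ∈ E) (hs₀ : s₀ ∈ D)
    (hpath : IsPathEdgesLE2 (insert e s₀)) :
    (∀ t ∈ insert (insert e s₀) (D.erase s₀), IsPathEdgesLE2 t) ∧
      ((insert (insert e s₀) (D.erase s₀) : Finset (Finset (Sym2 V))) :
        Set (Finset (Sym2 V))).Pairwise Disjoint ∧
      (insert (insert e s₀) (D.erase s₀)).sup id = E ∧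
      (insert (insert e s₀) (D.erase s₀)).card = D.card := by
  have hsubD : ∀ t ∈ D, t ⊆ E.erase e := fun t ht => hsup ▸ Finset.le_sup (f := id) ht
  have hnew : insert e s₀ ∉ D.erase s₀ := by
    intro h
    exact Finset.notMem_erase e E (hsubD _ (Finset.mem_of_mem_erase h)
      (Finset.mem_insert_self e s₀))
  have hsupE : (D.erase s₀).sup id = E.erase e \ s₀ := by
    rw [sup_erase_of_pairwise hdisj hs₀, hsup]
  have hdisj2 : ∀ t ∈ D.erase s₀, Disjoint (insert e s₀) t := by
    intro t ht
    rw [Finset.disjoint_left]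
    intro g hg hgt
    rcases Finset.mem_insert.mp hg with rfl | hgs
    · exact Finset.notMem_erase g E (hsubD t (Finset.mem_of_mem_erase ht) hgt)
    · exact Finset.disjoint_left.mp
        (hdisj (Finset.mem_coe.mpr (Finset.mem_of_mem_erase ht)) (Finset.mem_coe.mpr hs₀)
          (Finset.ne_of_mem_erase ht)) hgt hgs
  refine ⟨?_, ?_, ?_, ?_⟩
  · intro t ht
    rcases Finset.mem_insert.mp ht with rfl | ht
    · exact hpath
    · exact hparts t (Finset.mem_of_mem_erase ht)
  · intro a ha b hb hab
    simp only [Finset.coe_insert, Set.mem_insert_iff, Finset.mem_coe] at ha hb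
    rcases ha with rfl | ha
    · rcases hb with rfl | hb
      · exact absurd rfl hab
      · exact hdisj2 b hb
    · rcases hb with rfl | hb
      · exact (hdisj2 a ha).symm
      · exact hdisj (Finset.mem_coe.mpr (Finset.mem_of_mem_erase ha))
          (Finset.mem_coe.mpr (Finset.mem_of_mem_erase hb)) hab
  · rw [Finset.sup_insert, hsupE]
    simp only [id]
    have hs₀sub : s₀ ⊆ E.erase e := hsubD s₀ hs₀
    rw [Finset.sup_eq_union, Finset.insert_union, Finset.union_sdiff_of_subset hs₀sub,
      Finset.insert_erase heE]
  · rw [Finset.card_insert_of_notMem hnew, Finset.card_erase_of_mem hs₀]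
    have : 0 < D.card := Finset.card_pos.mpr ⟨s₀, hs₀⟩
    omega


variable [Fintype V]

lemma key : ∀ (n : ℕ) (E : Finset (Sym2 V)), E.card ≤ n → E.Nonempty →
    (∀ g ∈ E, ¬ g.IsDiag) → Conn E → ∀ r, Supp E r →
    ∃ D : Finset (Finset (Sym2 V)),
      (∀ s ∈ D, IsPathEdgesLE2 s) ∧ (D : Set (Finset (Sym2 V))).Pairwise Disjoint ∧
      D.sup id = E ∧ D.card = (E.card + 1) / 2 ∧
      (¬ Even E.card → ∃ b : V, s(r, b) ∈ E ∧ ({s(r, b)} : Finset (Sym2 V)) ∈ D) := by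
  intro n
  induction n with
  | zero =>
    intro E h0 hne hnd hconn r hSr
    exact absurd (Finset.card_pos.mpr hne) (by omega)
  | succ n IH =>
    intro E hcard hne hnd hconn r hSr
    classical
    by_cases hm1 : E.card = 1
    · -- base case: a single edge
      obtain ⟨y, hry⟩ := hSr
      obtain ⟨hmem, hryne⟩ := gr_adj.mp hry
      have hEeq : E = {s(r,y)} := by
        obtain ⟨a, ha⟩ := Finset.card_eq_one.mp hm1
        subst ha
        rw [Finset.mem_singleton] at hmem
        rw [hmem]
      refine ⟨{{s(r,y)}}, ?_, ?_, ?_, ?_, ?_⟩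
      · intro s hs
        rw [Finset.mem_singleton] at hs
        subst hs
        exact Or.inl ⟨r, y, hryne, rfl⟩
      · simp
      · rw [Finset.sup_singleton, hEeq]; rfl
      · rw [hm1]; simp
      · intro _
        exact ⟨y, hmem, Finset.mem_singleton_self _⟩
    · -- main case
      have hm2 : 2 ≤ E.card := by
        have := Finset.card_pos.mpr hne; omega
      -- choose a support vertex at maximum distance from r
      obtain ⟨v, hvmem, hvmax⟩ := Finset.exists_max_image
          (Finset.univ.filter fun x => Supp E x) (fun x => (Gr E).dist r x)
          ⟨r, by simp [hSr]⟩
      rw [Finset.mem_filter] at hvmem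
      have hvS : Supp E v := hvmem.2
      have hmax : ∀ x, Supp E x → (Gr E).dist r x ≤ (Gr E).dist r v := fun x hx =>
        hvmax x (by simp [hx])
      have hrvne : r ≠ v := by
        obtain ⟨y, hry⟩ := id hSr
        have hySupp : Supp E y := ⟨r, hry.symm⟩
        have h1 : 0 < (Gr E).dist r y := (hconn r y hSr hySupp).pos_dist_of_ne hry.ne
        have h2 := hmax y hySupp
        rintro rfl
        rw [SimpleGraph.dist_self] at h2
        omega
      have hdistv : 1 ≤ (Gr E).dist r v := by
        obtain ⟨y, hry⟩ := id hSr
        have hySupp : Supp E y := ⟨r, hry.symm⟩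
        have h1 : 0 < (Gr E).dist r y := (hconn r y hSr hySupp).pos_dist_of_ne hry.ne
        have h2 := hmax y hySupp
        omega
      -- r has an edge avoiding v
      have hRz : ∃ z, (Gr E).Adj r z ∧ z ≠ v := by
        by_contra hcon
        push_neg at hcon
        have hsub : ∀ x, Supp E x → x = r ∨ x = v := by
          intro x hx
          by_cases hxv : x = v
          · exact Or.inr hxv
          · obtain ⟨p, hp, hplen, hpv⟩ :=
              exists_shortest_avoiding (hconn r x hSr hx) hxv (hmax x hx)
            cases p with
            | nil => exact Or.inl rfl
            | cons h' q =>
              exfalso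
              apply hpv
              rw [SimpleGraph.Walk.support_cons]
              refine List.mem_cons_of_mem _ ?_
              rw [← hcon _ h']
              exact q.start_mem_support
        have hEsub : E ⊆ {s(r,v)} := by
          intro g hg
          rw [Finset.mem_singleton]
          induction g with
          | _ x y =>
            have hxy : x ≠ y := fun h => hnd _ hg (Sym2.mk_isDiag_iff.mpr h)
            have hxS : Supp E x := ⟨y, gr_adj.mpr ⟨hg, hxy⟩⟩
            have hyS : Supp E y :=
              ⟨x, gr_adj.mpr ⟨by rw [Sym2.eq_swap]; exact hg, hxy.symm⟩⟩
            rcases hsub x hxS with rfl | rfl <;> rcases hsub y hyS with h2 | h2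
            · exact absurd h2 (Ne.symm hxy)
            · rw [h2]
            · rw [h2]; exact Sym2.eq_swap
            · exact absurd h2 (Ne.symm hxy)
        have := Finset.card_le_card hEsub
        rw [Finset.card_singleton] at this
        omega
      -- neighbor u of v
      obtain ⟨u, hvu⟩ := hvS
      have hune : u ≠ v := hvu.ne'
      have heE : s(v,u) ∈ E := (gr_adj.mp hvu).1
      by_cases hdeg : ∀ z, (Gr E).Adj v z → z = u
      · -- v has degree 1 via u
        -- u has another neighbor
        have hu2 : ∃ z, (Gr E).Adj u z ∧ z ≠ v := by
          by_contra hcon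
          push_neg at hcon
          have hsub : ∀ x, Supp E x → x = u ∨ x = v := by
            intro x hx
            obtain ⟨p0⟩ := hconn u x ⟨v, hvu.symm⟩ hx
            have hp := p0.bypass_isPath
            revert hp
            generalize p0.bypass = p
            intro hp
            cases p with
            | nil => exact Or.inl rfl
            | cons h1 q =>
              have hz : _ = v := hcon _ h1
              subst hz
              cases q with
              | nil => exact Or.inr rfl
              | cons h2 q' =>
                exfalso
                have hz2 : _ = u := hdeg _ h2
                subst hz2
                have hnod := hp.support_nodup
                rw [SimpleGraph.Walk.support_cons] at hnod
                apply (List.nodup_cons.mp hnod).1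
                rw [SimpleGraph.Walk.support_cons]
                exact List.mem_cons_of_mem _ q'.start_mem_support
          have hEsub : E ⊆ {s(v,u)} := by
            intro g hg
            rw [Finset.mem_singleton]
            induction g with
            | _ x y =>
              have hxy : x ≠ y := fun h => hnd _ hg (Sym2.mk_isDiag_iff.mpr h)
              have hxS : Supp E x := ⟨y, gr_adj.mpr ⟨hg, hxy⟩⟩
              have hyS : Supp E y :=
                ⟨x, gr_adj.mpr ⟨by rw [Sym2.eq_swap]; exact hg, hxy.symm⟩⟩
              rcases hsub x hxS with rfl | rfl <;> rcases hsub y hyS with h2 | h2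
              · exact absurd h2 (Ne.symm hxy)
              · rw [h2]; exact Sym2.eq_swap
              · rw [h2]
              · exact absurd h2 (Ne.symm hxy)
          have := Finset.card_le_card hEsub
          rw [Finset.card_singleton] at this
          omega
        -- distance relation
        have hdu : (Gr E).dist r u + 1 = (Gr E).dist r v := by
          have hle1 : (Gr E).dist r v ≤ (Gr E).dist r u + 1 := by
            obtain ⟨p, hp⟩ := (hconn r u hSr ⟨v, hvu.symm⟩).exists_walk_length_eq_dist
            have h := SimpleGraph.dist_le (p.concat hvu.symm)
            rwa [SimpleGraph.Walk.length_concat, hp] at h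
          have hle2 : (Gr E).dist r u + 1 ≤ (Gr E).dist r v := by
            obtain ⟨W, hW⟩ := (hconn r v hSr ⟨u, hvu⟩).exists_walk_length_eq_dist
            obtain ⟨z, hadj', T, hcons⟩ :=
              SimpleGraph.Walk.exists_eq_cons_of_ne (Ne.symm hrvne) W.reverse
            have hz : u = z := (hdeg z hadj').symm
            subst hz
            have hlen : T.length + 1 = (Gr E).dist r v := by
              have h := congrArg SimpleGraph.Walk.length hcons
              rw [SimpleGraph.Walk.length_reverse, hW, SimpleGraph.Walk.length_cons] at h
              omega
            have hTd : (Gr E).dist u r ≤ T.length := SimpleGraph.dist_le T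
            rw [SimpleGraph.dist_comm] at hTd
            omega
          omega
        -- common erase-e facts
        have havoid₁ : ∀ g ∈ E, v ∉ g → g ∈ E.erase s(v,u) := by
          intro g hg hvg
          exact Finset.mem_erase.mpr ⟨fun h => hvg (h ▸ (by simp : v ∈ s(v,u))), hg⟩
        have hE₁nd : ∀ g ∈ E.erase s(v,u), ¬g.IsDiag :=
          fun g hg => hnd g (Finset.mem_of_mem_erase hg)
        have hxnv₁ : ∀ x, Supp (E.erase s(v,u)) x → x ≠ v := by
          intro x hx hxveq
          subst hxveq
          obtain ⟨z, hadj⟩ := hx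
          obtain ⟨hmem, hne'⟩ := gr_adj.mp hadj
          have hz : z = u := hdeg z (gr_adj.mpr ⟨Finset.mem_of_mem_erase hmem, hne'⟩)
          subst hz
          exact (Finset.mem_erase.mp hmem).1 rfl
        have hreach₁ : ∀ x, Supp (E.erase s(v,u)) x → (Gr (E.erase s(v,u))).Reachable r x := by
          intro x hx
          have hxv := hxnv₁ x hx
          have hxS : Supp E x := by
            obtain ⟨y', hy'⟩ := hx
            exact ⟨y', gr_adj.mpr ⟨Finset.mem_of_mem_erase (gr_adj.mp hy').1,
              (gr_adj.mp hy').2⟩⟩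
          exact reach_avoid hnd (hconn r x hSr hxS) hxv (hmax x hxS) havoid₁
        have hconn₁ : Conn (E.erase s(v,u)) :=
          fun x y hx hy => (hreach₁ x hx).symm.trans (hreach₁ y hy)
        obtain ⟨z₁, huz₁, hz₁v⟩ := hu2
        have huz₁E₁ : s(u,z₁) ∈ E.erase s(v,u) := by
          refine Finset.mem_erase.mpr ⟨?_, (gr_adj.mp huz₁).1⟩
          intro h
          rcases Sym2.eq_iff.mp h with ⟨h1, -⟩ | ⟨-, h2⟩
          · exact hune h1
          · exact hz₁v h2
        have hSu₁ : Supp (E.erase s(v,u)) u := ⟨z₁, gr_adj.mpr ⟨huz₁E₁, huz₁.ne⟩⟩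
        have hne₁ : (E.erase s(v,u)).Nonempty := ⟨_, huz₁E₁⟩
        have hcard₁ : (E.erase s(v,u)).card = E.card - 1 := Finset.card_erase_of_mem heE
        by_cases hpar : Even E.card
        · -- CASE B : even, merge the leaf edge into the singleton at u
          obtain ⟨D₁, h1parts, h1disj, h1sup, h1card, h1sing⟩ :=
            IH (E.erase s(v,u)) (by omega) hne₁ hE₁nd hconn₁ u hSu₁
          have hodd₁ : ¬ Even (E.erase s(v,u)).card := by
            rw [Nat.even_iff] at hpar ⊢
            omega
          obtain ⟨b, hbE₁, hbD₁⟩ := h1sing hodd₁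
          have hbv : b ≠ v := by
            rintro rfl
            exact (Finset.mem_erase.mp hbE₁).1 Sym2.eq_swap
          have hbu : u ≠ b := fun h => hE₁nd _ hbE₁ (Sym2.mk_isDiag_iff.mpr h)
          have hpath : IsPathEdgesLE2 (insert s(v,u) {s(u,b)}) :=
            Or.inr ⟨v, u, b, Ne.symm hune, hbu, Ne.symm hbv, rfl⟩
          obtain ⟨hp', hd', hs', hc'⟩ := goodD_merge h1parts h1disj h1sup heE hbD₁ hpath
          refine ⟨_, hp', hd', hs', ?_, ?_⟩
          · rw [hc', h1card, hcard₁]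
            rw [Nat.even_iff] at hpar
            omega
          · intro h
            exact absurd hpar h
        · by_cases hur : u = r
          · -- CASE C : odd, leaf attached to r
            subst hur
            obtain ⟨D₁, h1parts, h1disj, h1sup, h1card, h1sing⟩ :=
              IH (E.erase s(v,u)) (by omega) hne₁ hE₁nd hconn₁ u hSu₁
            have hpath : IsPathEdgesLE2 ({s(v,u)} : Finset (Sym2 V)) :=
              Or.inl ⟨v, u, Ne.symm hune, rfl⟩
            have hsup' : D₁.sup id = E \ {s(v,u)} := by rw [h1sup, Finset.erase_eq]
            obtain ⟨hp', hd', hs', hc'⟩ := goodD_insert h1parts h1disj hsup' hpath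
              (by intro g hg; rw [Finset.mem_singleton] at hg; rw [hg]; exact heE)
              ⟨_, Finset.mem_singleton_self _⟩
            refine ⟨_, hp', hd', hs', ?_, ?_⟩
            · rw [hc', h1card, hcard₁]
              rw [Nat.even_iff] at hpar
              omega
            · intro _
              refine ⟨v, ?_, ?_⟩
              · rw [Sym2.eq_swap]; exact heE
              · rw [Sym2.eq_swap]; exact Finset.mem_insert_self _ _
          · -- CASE D : odd, leaf not at r
            have hdru : (Gr E).dist r u ≤ (Gr E).dist r v := by omega
            obtain ⟨P, hPpath, hPlen, hPv⟩ :=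
              exists_shortest_avoiding (hconn r u hSr ⟨v, hvu.symm⟩) hune hdru
            obtain ⟨w₀, hadj₀, T₀, hPrev⟩ :=
              SimpleGraph.Walk.exists_eq_cons_of_ne hur P.reverse
            have hw₀P : w₀ ∈ P.support := by
              have h : w₀ ∈ P.reverse.support := by
                rw [hPrev, SimpleGraph.Walk.support_cons]
                exact List.mem_cons_of_mem _ T₀.start_mem_support
              rwa [SimpleGraph.Walk.support_reverse, List.mem_reverse] at h
            have hw₀v : w₀ ≠ v := fun h => hPv (h ▸ hw₀P)
            obtain ⟨w, hadj_uw, hwv, hBR⟩ :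
                ∃ w, (Gr E).Adj u w ∧ w ≠ v ∧
                  (s(u,w) ∉ P.edges ∨ ∀ z, (Gr E).Adj u z → z = v ∨ z = w) := by
              by_cases hbr : ∃ z, (Gr E).Adj u z ∧ z ≠ v ∧ z ≠ w₀
              · obtain ⟨w, h1, h2, h3⟩ := hbr
                refine ⟨w, h1, h2, Or.inl ?_⟩
                intro hf
                have hf' : s(u,w) ∈ P.reverse.edges := by
                  rw [SimpleGraph.Walk.edges_reverse, List.mem_reverse]; exact hf
                rw [hPrev, SimpleGraph.Walk.edges_cons] at hf'
                rcases List.mem_cons.mp hf' with h | h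
                · rcases Sym2.eq_iff.mp h with ⟨-, h2'⟩ | ⟨-, h2'⟩
                  · exact h3 h2'
                  · exact h1.ne h2'.symm
                · have hupath := hPpath.reverse.support_nodup
                  rw [hPrev, SimpleGraph.Walk.support_cons] at hupath
                  exact (List.nodup_cons.mp hupath).1
                    (mem_support_of_mem_edge h (by simp))
              · push_neg at hbr
                refine ⟨w₀, hadj₀, hw₀v, Or.inr fun z hz => ?_⟩
                by_cases hzv : z = v
                · exact Or.inl hzv
                · exact Or.inr (hbr z hz hzv)
            have hwu : w ≠ u := hadj_uw.ne'
            have hfE : s(u,w) ∈ E := (gr_adj.mp hadj_uw).1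
            have hreach₂ := caseD_reach hnd hconn hSr hmax hdeg (Ne.symm hur) hwv hwu
              hadj_uw hdu hPpath hPv hBR
            -- r stays in the support
            have hSr₂ : Supp (E \ {s(v,u), s(u,w)}) r := by
              by_cases hEx : ∃ z, (Gr E).Adj r z ∧ s(r,z) ∈ E \ {s(v,u), s(u,w)}
              · obtain ⟨z, hz1, hz2⟩ := hEx
                exact ⟨z, gr_adj.mpr ⟨hz2, hz1.ne⟩⟩
              · exfalso
                push_neg at hEx
                have hrn : ∀ z, (Gr E).Adj r z → z = u ∧ r = w := by
                  intro z hz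
                  have hmem := (gr_adj.mp hz).1
                  have hnot := hEx z hz
                  have hmem2 : s(r,z) ∈ ({s(v,u), s(u,w)} : Finset (Sym2 V)) := by
                    by_contra hc
                    exact hnot (Finset.mem_sdiff.mpr ⟨hmem, hc⟩)
                  simp only [Finset.mem_insert, Finset.mem_singleton] at hmem2
                  rcases hmem2 with h | h
                  · rcases Sym2.eq_iff.mp h with ⟨h1, -⟩ | ⟨h1, -⟩
                    · exact absurd h1 hrvne
                    · exact absurd h1.symm hur
                  · rcases Sym2.eq_iff.mp h with ⟨h1, -⟩ | ⟨h1, h2⟩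
                    · exact absurd h1.symm hur
                    · exact ⟨h2, h1⟩
                obtain ⟨z0, hz0⟩ := id hSr
                obtain ⟨-, hrw⟩ := hrn z0 hz0
                have hbr2 : ∀ z, (Gr E).Adj u z → z = v ∨ z = w := by
                  rcases hBR with h | h
                  · exfalso
                    obtain ⟨z₁, hadj₁, Q₁, hPcons⟩ :=
                      SimpleGraph.Walk.exists_eq_cons_of_ne (Ne.symm hur) P
                    have hz₁ := (hrn z₁ hadj₁).1
                    apply h
                    rw [hPcons, SimpleGraph.Walk.edges_cons]
                    refine List.mem_cons.mpr (Or.inl ?_)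
                    rw [hz₁, hrw]
                    exact Sym2.eq_swap
                  · exact h
                have hsub : ∀ x, Supp E x → x = r ∨ x = u ∨ x = v := by
                  intro x hx
                  by_cases hxv : x = v
                  · exact Or.inr (Or.inr hxv)
                  obtain ⟨p, hp, -, hpv⟩ :=
                    exists_shortest_avoiding (hconn r x hSr hx) hxv (hmax x hx)
                  cases p with
                  | nil => exact Or.inl rfl
                  | cons h1 q =>
                    have hz₁ : _ = u := (hrn _ h1).1
                    subst hz₁
                    cases q with
                    | nil => exact Or.inr (Or.inl rfl)
                    | cons h2 q' =>
                      exfalso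
                      rcases hbr2 _ h2 with h3 | h3
                      · apply hpv
                        subst h3
                        rw [SimpleGraph.Walk.support_cons, SimpleGraph.Walk.support_cons]
                        exact List.mem_cons_of_mem _
                          (List.mem_cons_of_mem _ q'.start_mem_support)
                      · have hz2r : _ = r := h3.trans hrw.symm
                        subst hz2r
                        have hnod := hp.support_nodup
                        rw [SimpleGraph.Walk.support_cons] at hnod
                        apply (List.nodup_cons.mp hnod).1
                        rw [SimpleGraph.Walk.support_cons]
                        exact List.mem_cons_of_mem _ q'.start_mem_support
                have hnrv : s(r,v) ∉ E := by
                  intro hmem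
                  exact hur (hdeg r (gr_adj.mpr
                    ⟨by rw [Sym2.eq_swap]; exact hmem, Ne.symm hrvne⟩)).symm
                have hEsub : E ⊆ {s(v,u), s(u,w)} := by
                  intro g hg
                  induction g with
                  | _ x y =>
                    have hxy : x ≠ y := fun h => hnd _ hg (Sym2.mk_isDiag_iff.mpr h)
                    have hxS : Supp E x := ⟨y, gr_adj.mpr ⟨hg, hxy⟩⟩
                    have hyS : Supp E y :=
                      ⟨x, gr_adj.mpr ⟨by rw [Sym2.eq_swap]; exact hg, hxy.symm⟩⟩
                    simp only [Finset.mem_insert, Finset.mem_singleton]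
                    rcases hsub x hxS with rfl | rfl | rfl <;>
                      rcases hsub y hyS with h2 | h2 | h2
                    · exact absurd h2 (Ne.symm hxy)
                    · subst h2
                      right
                      rw [hrw]
                      exact Sym2.eq_swap
                    · subst h2
                      exact absurd hg hnrv
                    · subst h2
                      right
                      rw [hrw]
                    · exact absurd h2 (Ne.symm hxy)
                    · subst h2
                      left
                      exact Sym2.eq_swap
                    · subst h2
                      exfalso
                      apply hnrv
                      rw [Sym2.eq_swap] at hg
                      exact hg
                    · subst h2
                      left
                      rfl
                    · exact absurd h2 (Ne.symm hxy)
                have hcle := Finset.card_le_card hEsub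
                have hc2 : ({s(v,u), s(u,w)} : Finset (Sym2 V)).card ≤ 2 :=
                  le_trans (Finset.card_insert_le _ _) (by simp)
                rw [Nat.even_iff] at hpar
                omega
            have hconn₂ : Conn (E \ {s(v,u), s(u,w)}) :=
              fun x y hx hy => (hreach₂ x hx).symm.trans (hreach₂ y hy)
            have hnd₂ : ∀ g ∈ E \ {s(v,u), s(u,w)}, ¬g.IsDiag :=
              fun g hg => hnd g (Finset.sdiff_subset hg)
            have hsubEF : ({s(v,u), s(u,w)} : Finset (Sym2 V)) ⊆ E := by
              intro g hg
              simp only [Finset.mem_insert, Finset.mem_singleton] at hg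
              rcases hg with rfl | rfl
              · exact heE
              · exact hfE
            have hef : s(v,u) ≠ s(u,w) := by
              intro h
              rcases Sym2.eq_iff.mp h with ⟨h1, -⟩ | ⟨h1, -⟩
              · exact hune h1.symm
              · exact hwv h1.symm
            have hcard₂ : (E \ {s(v,u), s(u,w)}).card = E.card - 2 := by
              rw [Finset.card_sdiff_of_subset hsubEF,
                Finset.card_insert_of_notMem (by simp [hef]), Finset.card_singleton]
            have hne₂ : (E \ {s(v,u), s(u,w)}).Nonempty := by
              obtain ⟨z, hz⟩ := hSr₂
              exact ⟨_, (gr_adj.mp hz).1⟩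
            obtain ⟨D₂, h2parts, h2disj, h2sup, h2card, h2sing⟩ :=
              IH (E \ {s(v,u), s(u,w)}) (by omega) hne₂ hnd₂ hconn₂ r hSr₂
            have hpath : IsPathEdgesLE2 ({s(v,u), s(u,w)} : Finset (Sym2 V)) :=
              Or.inr ⟨v, u, w, Ne.symm hune, Ne.symm hwu, Ne.symm hwv, rfl⟩
            obtain ⟨hp', hd', hs', hc'⟩ := goodD_insert h2parts h2disj h2sup hpath hsubEF
              ⟨_, Finset.mem_insert_self _ _⟩
            refine ⟨_, hp', hd', hs', ?_, ?_⟩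
            · rw [hc', h2card, hcard₂]
              omega
            · intro hoddE
              have hodd₂ : ¬ Even (E \ {s(v,u), s(u,w)}).card := by
                rw [Nat.even_iff] at hoddE ⊢
                omega
              obtain ⟨b, hbE, hbD⟩ := h2sing hodd₂
              exact ⟨b, Finset.sdiff_subset hbE, Finset.mem_insert_of_mem hbD⟩
      · -- CASE A : v has two distinct neighbors
        push_neg at hdeg
        obtain ⟨b, hvb, hbu⟩ := hdeg
        have hbv : b ≠ v := hvb.ne'
        have hebE : s(v,b) ∈ E := (gr_adj.mp hvb).1
        have heaE : s(u,v) ∈ E := by rw [Sym2.eq_swap]; exact heE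
        have heaeb : s(u,v) ≠ s(v,b) := by
          intro h
          rcases Sym2.eq_iff.mp h with ⟨h1, -⟩ | ⟨h1, -⟩
          · exact hune h1
          · exact hbu h1.symm
        have hvea : v ∈ s(u,v) := by simp
        have hveb : v ∈ s(v,b) := by simp
        have havoid : ∀ g ∈ E, v ∉ g → g ∈ E \ {s(u,v), s(v,b)} := by
          intro g hg hvg
          rw [Finset.mem_sdiff]
          refine ⟨hg, ?_⟩
          simp only [Finset.mem_insert, Finset.mem_singleton]
          rintro (rfl | rfl)
          · exact hvg hvea
          · exact hvg hveb
        obtain ⟨z, hrz, hzv⟩ := hRz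
        have hrzE₂ : s(r,z) ∈ E \ {s(u,v), s(v,b)} := by
          refine havoid _ (gr_adj.mp hrz).1 ?_
          rw [Sym2.mem_iff]
          rintro (h | h)
          · exact hrvne h.symm
          · exact hzv h.symm
        have hSr₂ : Supp (E \ {s(u,v), s(v,b)}) r := ⟨z, gr_adj.mpr ⟨hrzE₂, hrz.ne⟩⟩
        have hne₂ : (E \ {s(u,v), s(v,b)}).Nonempty := ⟨_, hrzE₂⟩
        have hnd₂ : ∀ g ∈ E \ {s(u,v), s(v,b)}, ¬g.IsDiag :=
          fun g hg => hnd g (Finset.sdiff_subset hg)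
        have hauxreach : ∀ x, Supp (E \ {s(u,v), s(v,b)}) x → x ≠ v →
            (Gr (E \ {s(u,v), s(v,b)})).Reachable r x := by
          intro x hx hxv
          have hxS : Supp E x := by
            obtain ⟨y', hy'⟩ := hx
            exact ⟨y', gr_adj.mpr ⟨Finset.sdiff_subset (gr_adj.mp hy').1, (gr_adj.mp hy').2⟩⟩
          exact reach_avoid hnd (hconn r x hSr hxS) hxv (hmax x hxS) havoid
        have hreach₂ : ∀ x, Supp (E \ {s(u,v), s(v,b)}) x →
            (Gr (E \ {s(u,v), s(v,b)})).Reachable r x := by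
          intro x hx
          by_cases hxv : x = v
          · obtain ⟨c, hvc⟩ := hx
            have hcS : Supp (E \ {s(u,v), s(v,b)}) c := ⟨x, hvc.symm⟩
            exact (hauxreach c hcS fun h => hvc.ne' (h.trans hxv.symm)).trans
              hvc.symm.reachable
          · exact hauxreach x hx hxv
        have hconn₂ : Conn (E \ {s(u,v), s(v,b)}) :=
          fun x y hx hy => (hreach₂ x hx).symm.trans (hreach₂ y hy)
        have hsubEF : ({s(u,v), s(v,b)} : Finset (Sym2 V)) ⊆ E := by
          intro g hg
          simp only [Finset.mem_insert, Finset.mem_singleton] at hg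
          rcases hg with rfl | rfl
          · exact heaE
          · exact hebE
        have hcard₂ : (E \ {s(u,v), s(v,b)}).card = E.card - 2 := by
          rw [Finset.card_sdiff_of_subset hsubEF,
            Finset.card_insert_of_notMem (by simp [heaeb]), Finset.card_singleton]
        obtain ⟨D₂, h2parts, h2disj, h2sup, h2card, h2sing⟩ :=
          IH (E \ {s(u,v), s(v,b)}) (by omega) hne₂ hnd₂ hconn₂ r hSr₂
        have hpath : IsPathEdgesLE2 ({s(u,v), s(v,b)} : Finset (Sym2 V)) :=
          Or.inr ⟨u, v, b, hune, Ne.symm hbv, Ne.symm hbu, rfl⟩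
        obtain ⟨hp', hd', hs', hc'⟩ := goodD_insert h2parts h2disj h2sup hpath hsubEF
          ⟨_, Finset.mem_insert_self _ _⟩
        refine ⟨_, hp', hd', hs', ?_, ?_⟩
        · rw [hc', h2card, hcard₂]
          omega
        · intro hoddE
          have hodd₂ : ¬ Even (E \ {s(u,v), s(v,b)}).card := by
            rw [Nat.even_iff] at hoddE ⊢
            omega
          obtain ⟨b', hbE, hbD⟩ := h2sing hodd₂
          exact ⟨b', Finset.sdiff_subset hbE, Finset.mem_insert_of_mem hbD⟩


end PDAux

theorem stmt_6 {V : Type*} [Fintype V] [DecidableEq V]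
    (q : SimpleGraph V) [DecidableRel q.Adj]
    (hconn : q.Connected) (hE : q.edgeFinset.Nonempty)
    (D : Finset (Finset (Sym2 V)))
    (hD : IsDecompLE2 q D)
    (hmin : ∀ D' : Finset (Finset (Sym2 V)), IsDecompLE2 q D' → D.card ≤ D'.card) :
    (Even q.edgeFinset.card → (∀ s ∈ D, s.card = 2) ∧ D.card = q.edgeFinset.card / 2) ∧
      (¬ Even q.edgeFinset.card →
        (D.filter (fun s => s.card = 1)).card = 1 ∧
          (D.filter (fun s => s.card = 2)).card = q.edgeFinset.card / 2 ∧
          D.card = q.edgeFinset.card / 2 + 1) ∧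
      D.card = (q.edgeFinset.card + 1) / 2 := by
  classical
  obtain ⟨hDparts, hDdisj, hDsup⟩ := hD
  have hcards : ∀ s ∈ D, s.card = 1 ∨ s.card = 2 := by
    intro s hs
    rcases hDparts s hs with ⟨a, b, hab, rfl⟩ | ⟨a, b, c, hab, hbc, hac, rfl⟩
    · left; simp
    · right
      rw [Finset.card_insert_of_notMem, Finset.card_singleton]
      simp only [Finset.mem_singleton]
      intro h
      rcases Sym2.eq_iff.mp h with ⟨h1, -⟩ | ⟨h1, -⟩
      · exact hab h1
      · exact hac h1
  have hsum : q.edgeFinset.card = ∑ s ∈ D, s.card := by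
    rw [← hDsup, Finset.sup_eq_biUnion]
    exact Finset.card_biUnion (fun x hx y hy hxy => hDdisj hx hy hxy)
  have hGr : PDAux.Gr (q.edgeFinset) = q := by
    rw [PDAux.Gr, SimpleGraph.coe_edgeFinset, SimpleGraph.fromEdgeSet_edgeSet]
  have hnd : ∀ g ∈ q.edgeFinset, ¬ g.IsDiag := fun g hg =>
    q.not_isDiag_of_mem_edgeSet (SimpleGraph.mem_edgeFinset.mp hg)
  have hcn : PDAux.Conn q.edgeFinset := by
    intro x y _ _
    rw [hGr]
    exact hconn.preconnected x y
  have hsupp : ∃ r, PDAux.Supp q.edgeFinset r := by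
    obtain ⟨g, hg⟩ := hE
    induction g with
    | _ a b =>
      refine ⟨a, b, ?_⟩
      rw [PDAux.gr_adj]
      refine ⟨hg, fun h => hnd _ hg (Sym2.mk_isDiag_iff.mpr h)⟩
  obtain ⟨r, hr⟩ := hsupp
  obtain ⟨D₀, h0parts, h0disj, h0sup, h0card, -⟩ :=
    PDAux.key q.edgeFinset.card q.edgeFinset le_rfl hE hnd hcn r hr
  have hminle : D.card ≤ (q.edgeFinset.card + 1) / 2 := by
    have h := hmin D₀ ⟨h0parts, h0disj, h0sup⟩
    omega
  have hlow : q.edgeFinset.card ≤ 2 * D.card := by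
    calc q.edgeFinset.card = ∑ s ∈ D, s.card := hsum
    _ ≤ ∑ _s ∈ D, 2 := Finset.sum_le_sum (fun s hs => by rcases hcards s hs with h | h <;> omega)
    _ = 2 * D.card := by rw [Finset.sum_const, smul_eq_mul, mul_comm]
  have hDcard : D.card = (q.edgeFinset.card + 1) / 2 := by omega
  have h12 : (D.filter fun s => ¬ s.card = 1) = (D.filter fun s => s.card = 2) := by
    apply Finset.filter_congr
    intro s hs
    rcases hcards s hs with h | h <;> simp [h]
  have hfilt := Finset.card_filter_add_card_filter_not
    (s := D) (p := fun s => s.card = 1)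
  rw [h12] at hfilt
  have e1 : ∑ s ∈ D.filter (fun s => s.card = 1), s.card
      = (D.filter fun s => s.card = 1).card := by
    rw [Finset.sum_congr rfl fun s hs => (Finset.mem_filter.mp hs).2, Finset.sum_const,
      smul_eq_mul, mul_one]
  have e2 : ∑ s ∈ D.filter (fun s => s.card = 2), s.card
      = 2 * (D.filter fun s => s.card = 2).card := by
    rw [Finset.sum_congr rfl fun s hs => (Finset.mem_filter.mp hs).2, Finset.sum_const,
      smul_eq_mul, mul_comm]
  have hsum2 : q.edgeFinset.card = (D.filter fun s => s.card = 1).card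
      + 2 * (D.filter fun s => s.card = 2).card := by
    rw [hsum, ← Finset.sum_filter_add_sum_filter_not D (fun s => s.card = 1), e1, h12, e2]
  refine ⟨?_, ?_, hDcard⟩
  · intro hev
    rw [Nat.even_iff] at hev
    have hk1 : (D.filter fun s => s.card = 1).card = 0 := by omega
    constructor
    · intro s hs
      rcases hcards s hs with h | h
      · exfalso
        have : s ∈ D.filter fun s => s.card = 1 := Finset.mem_filter.mpr ⟨hs, h⟩
        rw [Finset.card_eq_zero.mp hk1] at this
        exact absurd this (Finset.notMem_empty s)
      · exact h
    · omega
  · intro hodd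
    rw [Nat.even_iff] at hodd
    refine ⟨by omega, by omega, by omega⟩
end

section
/- Let q be subgraph isomorphic to G via f, and let p be a path in q with canonical form p^c = (u_1, …, u_k); let p′ be the image path of p under f with canonical form p′^c = (v_1, …, v_k). Then either NL_q(u_i) ⊆ NL_G(v_i) for all i = 1, …, k, or NL_q(u_i) ⊆ NL_G(v_{k−i+1}) for all i = 1, …, k. -/
/-- The labeled neighborhood of a vertex. -/
def NL {V L : Type*} [Fintype V] (H : SimpleGraph V) [DecidableRel H.Adj]
    (vl : V → L) (el : V → V → L) (u : V) : Multiset (L × L) :=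
  (H.neighborFinset u).val.map (fun w => (vl w, el u w))

/-- The label code of a path given as a list of vertices. -/
def pathCode {V L : Type*} (vl : V → L) (el : V → V → L) : List V → List L
  | [] => []
  | [v] => [vl v]
  | v :: w :: rest => vl v :: el v w :: pathCode vl el (w :: rest)

/-- The canonical form of a path: the direction with lexicographically smaller code. -/
def canonPath {V L : Type*} [LinearOrder L] (vl : V → L) (el : V → V → L)
    (p : List V) : List V :=
  if pathCode vl el p ≤ pathCode vl el p.reverse then p else p.reverse

lemma NL_mono {V W L : Type*} [Fintype V] [Fintype W]
    (q : SimpleGraph V) [DecidableRel q.Adj] (G : SimpleGraph W) [DecidableRel G.Adj]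
    (lq : V → L) (eq : V → V → L) (lG : W → L) (eG : W → W → L)
    (f : V → W) (hinj : Function.Injective f)
    (hadj : ∀ a b : V, q.Adj a b → G.Adj (f a) (f b))
    (hvl : ∀ a : V, lq a = lG (f a))
    (hel : ∀ a b : V, q.Adj a b → eq a b = eG (f a) (f b))
    (u : V) : NL q lq eq u ≤ NL G lG eG (f u) := by
  unfold NL
  have h1 : ((q.neighborFinset u).val.map f) ≤ (G.neighborFinset (f u)).val := by
    rw [Multiset.le_iff_subset (Multiset.Nodup.map hinj (q.neighborFinset u).nodup)]
    intro x hx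
    simp only [Multiset.mem_map, Finset.mem_val, SimpleGraph.mem_neighborFinset] at hx ⊢
    obtain ⟨w, hw, rfl⟩ := hx
    exact hadj _ _ hw
  have h2 : (q.neighborFinset u).val.map (fun w => (lq w, eq u w)) =
      ((q.neighborFinset u).val.map f).map (fun x => (lG x, eG (f u) x)) := by
    rw [Multiset.map_map]
    apply Multiset.map_congr rfl
    intro x hx
    simp only [Finset.mem_val, SimpleGraph.mem_neighborFinset] at hx
    simp [Function.comp, hvl x, hel u x hx]
  rw [h2]
  exact Multiset.map_le_map h1

theorem stmt_12 {V W L : Type*} [Fintype V] [Fintype W] [LinearOrder L]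
    [Inhabited V] [Inhabited W]
    (q : SimpleGraph V) [DecidableRel q.Adj] (G : SimpleGraph W) [DecidableRel G.Adj]
    (lq : V → L) (eq : V → V → L) (lG : W → L) (eG : W → W → L)
    (f : V → W)
    (hinj : Function.Injective f)
    (hadj : ∀ a b : V, q.Adj a b → G.Adj (f a) (f b))
    (hvl : ∀ a : V, lq a = lG (f a))
    (hel : ∀ a b : V, q.Adj a b → eq a b = eG (f a) (f b))
    (p : List V) (hchain : p.Chain' q.Adj) (hnodup : p.Nodup) :
    (∀ i < p.length,
        NL q lq eq ((canonPath lq eq p).getD i default) ≤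
          NL G lG eG ((canonPath lG eG (p.map f)).getD i default)) ∨
      (∀ i < p.length,
        NL q lq eq ((canonPath lq eq p).getD i default) ≤
          NL G lG eG ((canonPath lG eG (p.map f)).getD (p.length - 1 - i) default)) := by

  classical
  set n := p.length with hn
  have hmap : ∀ (l : List V) (i : ℕ), i < l.length →
      (l.map f).getD i default = f (l.getD i default) := by
    intro l i hi
    rw [List.getD_eq_getElem _ _ (by simpa using hi), List.getD_eq_getElem _ _ hi,
      List.getElem_map]
  have hrev : ∀ (l : List V) (i : ℕ), i < l.length →
      l.reverse.getD i default = l.getD (l.length - 1 - i) default := by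
    intro l i hi
    rw [List.getD_eq_getElem _ _ (by simpa using hi),
      List.getD_eq_getElem _ _ (by omega), List.getElem_reverse]
  have key := NL_mono q G lq eq lG eG f hinj hadj hvl hel
  have hrevmap : (p.map f).reverse = p.reverse.map f := List.map_reverse.symm
  unfold canonPath
  by_cases hA : pathCode lq eq p ≤ pathCode lq eq p.reverse <;>
    by_cases hB : pathCode lG eG (p.map f) ≤ pathCode lG eG (p.map f).reverse <;>
    [rw [if_pos hA, if_pos hB]; rw [if_pos hA, if_neg hB, hrevmap];
     rw [if_neg hA, if_pos hB]; rw [if_neg hA, if_neg hB, hrevmap]]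
  · left; intro i hi; rw [hmap p i hi]; exact key _
  · right; intro i hi
    rw [hmap p.reverse (n - 1 - i) (by simp; omega), hrev p (n - 1 - i) (by omega)]
    have : n - 1 - (n - 1 - i) = i := by omega
    rw [this]; exact key _
  · right; intro i hi
    rw [hrev p i (by omega), hmap p (n - 1 - i) (by omega)]; exact key _
  · left; intro i hi
    rw [hrev p i (by omega), hmap p.reverse i (by simp; omega), hrev p i (by omega)]
    exact key _
end
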